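/- Let k ≥ 2 be an integer, and let C_k > 0, α > 0, β > 0 be reals. Suppose given reals t_1, …, t_k with 0 < t_1 ≤ t_2 ≤ ⋯ ≤ t_k, and for each i = 1, …, k−1 reals U_i > 0, α_i with 0 < α_i ≤ α, and β_i with 0 < β_i ≤ β. If β·Σ_{i=1}^{k−1} U_i ≤ ln( ((α/β) + 1)/(C_k/t_k + α/β) ), then there exists an index j ∈ {1, …, k} such that C_k + Σ_{i=1}^{k−1} α_i·t_i·U_i + Σ_{i=1}^{j−1} β_i·t_i·U_i ≤ t_j. -/

import Mathlib

open Finset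

theorem k2u_logarithmic_form
    (k : ℕ) (hk : 2 ≤ k) (Ck α β : ℝ)
    (hCk : 0 < Ck) (hα : 0 < α) (hβ : 0 < β)
    (t U a b : ℕ → ℝ)
    (ht1 : 0 < t 1)
    (hmono : ∀ i ∈ Finset.Icc 1 k, ∀ j ∈ Finset.Icc 1 k, i ≤ j → t i ≤ t j)
    (hU : ∀ i ∈ Finset.Icc 1 (k - 1), 0 < U i)
    (ha : ∀ i ∈ Finset.Icc 1 (k - 1), 0 < a i ∧ a i ≤ α)
    (hb : ∀ i ∈ Finset.Icc 1 (k - 1), 0 < b i ∧ b i ≤ β)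
    (hcond : β * ∑ i ∈ Finset.Icc 1 (k - 1), U i ≤
      Real.log ((α / β + 1) / (Ck / t k + α / β))) :
    ∃ j ∈ Finset.Icc 1 k,
      Ck + (∑ i ∈ Finset.Icc 1 (k - 1), a i * t i * U i)
        + (∑ i ∈ Finset.Icc 1 (j - 1), b i * t i * U i) ≤ t j := by
  by_contra hcon
  push_neg at hcon
  -- positivity of t on [1,k]
  have h1k : (1:ℕ) ∈ Finset.Icc 1 k := by simp [Finset.mem_Icc]; omega
  have hkk : k ∈ Finset.Icc 1 k := by simp [Finset.mem_Icc]; omega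
  have tpos : ∀ i ∈ Finset.Icc 1 k, 0 < t i := by
    intro i hi
    exact ht1.trans_le (hmono 1 h1k i hi (Finset.mem_Icc.mp hi).1)
  have hsub : Finset.Icc 1 (k-1) ⊆ Finset.Icc 1 k := by
    apply Finset.Icc_subset_Icc_right; omega
  set T : ℝ := ∑ i ∈ Finset.Icc 1 (k-1), t i * U i with hT
  set P : ℝ := ∏ i ∈ Finset.Icc 1 (k-1), (1 + β * U i) with hP
  set D : ℕ → ℝ := fun j => Ck + α * T + β * ∑ i ∈ Finset.Icc 1 (j-1), t i * U i with hD
  -- t j < D j for all j in [1,k]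
  have htD : ∀ j ∈ Finset.Icc 1 k, t j < D j := by
    intro j hj
    have hsub2 : Finset.Icc 1 (j-1) ⊆ Finset.Icc 1 (k-1) := by
      apply Finset.Icc_subset_Icc_right
      have := (Finset.mem_Icc.mp hj).2; omega
    have s1 : ∑ i ∈ Finset.Icc 1 (k-1), a i * t i * U i ≤ α * T := by
      rw [hT, Finset.mul_sum]
      apply Finset.sum_le_sum
      intro i hi
      have htUi : 0 < t i * U i := mul_pos (tpos i (hsub hi)) (hU i hi)
      have := (ha i hi).2
      nlinarith
    have s2 : ∑ i ∈ Finset.Icc 1 (j-1), b i * t i * U i ≤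
        β * ∑ i ∈ Finset.Icc 1 (j-1), t i * U i := by
      rw [Finset.mul_sum]
      apply Finset.sum_le_sum
      intro i hi
      have hi' := hsub2 hi
      have htUi : 0 < t i * U i := mul_pos (tpos i (hsub hi')) (hU i hi')
      have := (hb i hi').2
      nlinarith
    have := hcon j hj
    simp only [hD]
    linarith
  -- D j > 0 on [1,k]
  have hDpos : ∀ j ∈ Finset.Icc 1 k, 0 < D j :=
    fun j hj => (tpos j hj).trans (htD j hj)
  -- induction: D j ≤ D 1 * prod
  have key : ∀ j, 1 ≤ j → j ≤ k → D j ≤ D 1 * ∏ i ∈ Finset.Icc 1 (j-1), (1 + β * U i) := by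
    intro j hj1
    induction j, hj1 using Nat.le_induction with
    | base => intro _; simp
    | succ n hn ih =>
      intro hnk
      have hnk' : n ≤ k := by omega
      have ihn := ih hnk'
      have hnmem : n ∈ Finset.Icc 1 k := by simp [Finset.mem_Icc]; omega
      have hnmem' : n ∈ Finset.Icc 1 (k-1) := by simp [Finset.mem_Icc]; omega
      have hUn : 0 < U n := hU n hnmem'
      have htn : t n < D n := htD n hnmem
      have hDn : 0 < D n := hDpos n hnmem
      -- D (n+1) = D n + β * (t n * U n)
      have hIcc : Finset.Icc 1 n = insert n (Finset.Icc 1 (n-1)) := by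
        ext x; simp [Finset.mem_Icc, Finset.mem_insert]; omega
      have hnotmem : n ∉ Finset.Icc 1 (n-1) := by simp [Finset.mem_Icc]; omega
      have hstep : D (n+1) = D n + β * (t n * U n) := by
        simp only [hD, Nat.add_sub_cancel, hIcc, Finset.sum_insert hnotmem]
        ring
      have hprodstep : (∏ i ∈ Finset.Icc 1 ((n+1)-1), (1 + β * U i)) =
          (∏ i ∈ Finset.Icc 1 (n-1), (1 + β * U i)) * (1 + β * U n) := by
        simp only [Nat.add_sub_cancel, hIcc, Finset.prod_insert hnotmem]
        ring
      have h1 : D (n+1) ≤ D n * (1 + β * U n) := by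
        rw [hstep]
        nlinarith [mul_nonneg (mul_pos hβ hUn).le (sub_nonneg.mpr htn.le)]
      have h2 : D n * (1 + β * U n) ≤
          D 1 * (∏ i ∈ Finset.Icc 1 (n-1), (1 + β * U i)) * (1 + β * U n) := by
        apply mul_le_mul_of_nonneg_right ihn
        nlinarith
      rw [hprodstep]
      linarith [h1, h2, mul_assoc (D 1) (∏ i ∈ Finset.Icc 1 (n-1), (1 + β * U i)) (1 + β * U n)]
  -- specializations
  have hD1 : D 1 = Ck + α * T := by simp [hD]
  have hDk : D k = Ck + (α + β) * T := by
    simp only [hD, ← hT]; ring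
  have hkey := key k (by omega) le_rfl
  rw [hD1, hDk] at hkey
  have htk : 0 < t k := tpos k hkk
  have htkDk : t k < Ck + (α + β) * T := by
    have := htD k hkk; rw [hDk] at this; exact this
  -- P > 0
  have hPpos : 0 < P := by
    rw [hP]; apply Finset.prod_pos; intro i hi; nlinarith [hU i hi]
  -- P ≤ exp (β * ΣU)
  have hPexp : P ≤ Real.exp (β * ∑ i ∈ Finset.Icc 1 (k-1), U i) := by
    rw [Finset.mul_sum, Real.exp_sum, hP]
    apply Finset.prod_le_prod
    · intro i hi; nlinarith [hU i hi]
    · intro i hi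
      have := Real.add_one_le_exp (β * U i)
      linarith
  have hden : 0 < Ck / t k + α / β := by positivity
  have hR : 0 < (α / β + 1) / (Ck / t k + α / β) := by positivity
  have hPR : P ≤ (α / β + 1) / (Ck / t k + α / β) := by
    calc P ≤ Real.exp (β * ∑ i ∈ Finset.Icc 1 (k-1), U i) := hPexp
    _ ≤ Real.exp (Real.log ((α / β + 1) / (Ck / t k + α / β))) := Real.exp_le_exp.mpr hcond
    _ = (α / β + 1) / (Ck / t k + α / β) := Real.exp_log hR
  have hPR' : P * (Ck / t k + α / β) ≤ α / β + 1 := (le_div_iff₀ hden).mp hPR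
  have hB : (β * Ck + α * t k) * P ≤ (α + β) * t k := by
    have h := mul_le_mul_of_nonneg_right hPR' (by positivity : (0:ℝ) ≤ β * t k)
    have e1 : P * (Ck / t k + α / β) * (β * t k) = (β * Ck + α * t k) * P := by
      field_simp
    have e2 : (α / β + 1) * (β * t k) = (α + β) * t k := by
      field_simp
    rw [e1, e2] at h; exact h
  -- combine: hkey gives Ck + (α+β)T ≤ (Ck + αT) * P
  -- multiply by (α+β): (α+β)(Ck+(α+β)T) ≤ (βCk + α(Ck+(α+β)T)) P
  set Dk : ℝ := Ck + (α + β) * T with hDkdef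
  rw [← hP] at hkey
  have hA : (α + β) * Dk ≤ (β * Ck + α * Dk) * P := by
    have h := mul_le_mul_of_nonneg_left hkey (le_of_lt (add_pos hα hβ))
    have e : (α + β) * ((Ck + α * T) * P) = (β * Ck + α * Dk) * P := by
      rw [hDkdef]; ring
    linarith [h, e.le, e.ge]
  have h3 : (α + β) * (Dk - t k) ≤ α * P * (Dk - t k) := by nlinarith [hA, hB]
  have h4 : α + β ≤ α * P := by
    have hpos : 0 < Dk - t k := by simp only [hDkdef]; linarith
    exact le_of_mul_le_mul_right (by linarith [h3]) hpos
  have h5 : (α + β) * t k ≤ α * P * t k := mul_le_mul_of_nonneg_right h4 htk.le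
  nlinarith [mul_pos (mul_pos hβ hCk) hPpos]
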